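/- arXiv:0901.1107 — 2 statements merged into one kernel-verified Lean document; each statement's English description precedes it below -/
import Mathlib

section
/- Let A₁ and A₂ be nonnegative (positive semidefinite) operators on a finite-dimensional Hilbert space with null spaces L₁ and L₂ satisfying L₁ ∩ L₂ = {0}. Suppose no nonzero eigenvalue of A₁ or A₂ is smaller than v > 0. Then A₁ + A₂ ≥ v · 2 sin²(θ/2) as operators, where θ = θ(L₁, L₂) is the angle between L₁ and L₂, defined by cos θ = max { |⟨x, y⟩| : x ∈ L₁, y ∈ L₂, ‖x‖ = ‖y‖ = 1 }. -/
open scoped ComplexOrder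

lemma sq_trick {t u c S : ℝ} (ht : 0 ≤ t) (hu : 0 ≤ u) (hc : 0 ≤ c) (hS : 0 ≤ S)
    (h : u ^ 2 ≤ (1 + c) * S) : 2 * (t * u) ≤ (1 + c) * t ^ 2 + S := by
  have key : (2 * (t * u)) ^ 2 ≤ ((1 + c) * t ^ 2 + S) ^ 2 := by
    have h1 : t ^ 2 * u ^ 2 ≤ t ^ 2 * ((1 + c) * S) :=
      mul_le_mul_of_nonneg_left h (sq_nonneg t)
    nlinarith [sq_nonneg ((1 + c) * t ^ 2 - S)]
  have h2 : 0 ≤ 2 * (t * u) := by positivity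
  have h3 : 0 ≤ (1 + c) * t ^ 2 + S := by positivity
  nlinarith [key, h2, h3]

lemma geomB {E : Type*} [NormedAddCommGroup E] [InnerProductSpace ℂ E]
    (c : ℝ) (hc : 0 ≤ c) (x a b : E)
    (hab : ‖(inner ℂ a b : ℂ)‖ ≤ c * (‖a‖ * ‖b‖)) :
    (1 - c) * ‖x‖ ^ 2 ≤ ‖x - a‖ ^ 2 + ‖x - b‖ ^ 2 := by
  have h1 : RCLike.re (inner ℂ x (a + b) : ℂ) ≤ ‖x‖ * ‖a + b‖ := re_inner_le_norm x (a + b)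
  have h2 : ‖a + b‖ ^ 2 ≤ (1 + c) * (‖a‖ ^ 2 + ‖b‖ ^ 2) := by
    have := norm_add_sq (𝕜 := ℂ) a b
    have h3 : RCLike.re (inner ℂ a b : ℂ) ≤ c * (‖a‖ * ‖b‖) :=
      le_trans (RCLike.re_le_norm _) hab
    nlinarith [sq_nonneg (‖a‖ - ‖b‖), norm_nonneg a, norm_nonneg b]
  have e1 : ‖x - a‖ ^ 2 = ‖x‖ ^ 2 - 2 * RCLike.re (inner ℂ x a : ℂ) + ‖a‖ ^ 2 :=
    norm_sub_sq x a
  have e2 : ‖x - b‖ ^ 2 = ‖x‖ ^ 2 - 2 * RCLike.re (inner ℂ x b : ℂ) + ‖b‖ ^ 2 :=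
    norm_sub_sq x b
  have e3 : RCLike.re (inner ℂ x (a + b) : ℂ) =
      RCLike.re (inner ℂ x a : ℂ) + RCLike.re (inner ℂ x b : ℂ) := by
    rw [inner_add_right, map_add]
  have key := sq_trick (norm_nonneg x) (norm_nonneg (a + b)) hc
    (by positivity : (0:ℝ) ≤ ‖a‖ ^ 2 + ‖b‖ ^ 2) h2
  nlinarith [mul_nonneg (norm_nonneg x) (norm_nonneg (a + b))]


lemma specA {d : ℕ} {A : Matrix (Fin d) (Fin d) ℂ} (hA : A.PosSemidef)
    {v : ℝ} (hev : ∀ i, hA.1.eigenvalues i = 0 ∨ v ≤ hA.1.eigenvalues i)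
    (x : EuclideanSpace ℂ (Fin d)) :
    ∃ k ∈ LinearMap.ker (Matrix.toEuclideanLin A),
      v * ‖x - k‖ ^ 2 ≤ RCLike.re (inner ℂ x (Matrix.toEuclideanLin A x) : ℂ) := by
  classical
  set T := Matrix.toEuclideanLin A with hT
  set b := hA.1.eigenvectorBasis with hb
  set μ := hA.1.eigenvalues with hμ
  set f : Fin d → ℂ := fun i => b.repr x i with hf
  have hTb : ∀ i, T (b i) = (μ i : ℂ) • b i := by
    intro i
    have := hA.1.mulVec_eigenvectorBasis i
    ext j
    have := congrFun this j
    simpa [hT, hb, hμ, Matrix.toEuclideanLin_apply, Pi.smul_apply, Complex.real_smul] using this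
  have hsymm : T.IsSymmetric := Matrix.isHermitian_iff_isSymmetric.mp hA.1
  set S : Finset (Fin d) := Finset.univ.filter (fun i => μ i = 0) with hS
  set k : EuclideanSpace ℂ (Fin d) := ∑ i ∈ S, f i • b i with hk
  refine ⟨k, ?_, ?_⟩
  · simp only [LinearMap.mem_ker, hk, map_sum, map_smul]
    refine Finset.sum_eq_zero fun i hi => ?_
    rw [hTb i]
    rw [hS, Finset.mem_filter] at hi
    simp [hi.2]
  · -- coefficients of k
    have hbij : ∀ i j : Fin d, (inner ℂ (b j) (b i) : ℂ) = if j = i then 1 else 0 :=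
      fun i j => orthonormal_iff_ite.mp b.orthonormal j i
    have hrk : ∀ j, b.repr k j = if μ j = 0 then f j else 0 := by
      intro j
      rw [b.repr_apply_apply, hk, inner_sum]
      simp_rw [inner_smul_right, hbij]
      simp only [mul_ite, mul_one, mul_zero]
      rw [Finset.sum_ite_eq S j f]
      simp [hS]
    -- quadratic form
    have hrT : ∀ j, b.repr (T x) j = (μ j : ℂ) * f j := by
      intro j
      rw [b.repr_apply_apply, ← hsymm (b j) x, hTb j, inner_smul_left, ← b.repr_apply_apply]
      simp [hf]
    have hq : RCLike.re (inner ℂ x (T x) : ℂ) = ∑ j, μ j * ‖f j‖ ^ 2 := by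
      have := b.repr.inner_map_map x (T x)
      rw [← this, PiLp.inner_apply]
      rw [map_sum]
      refine Finset.sum_congr rfl fun j _ => ?_
      rw [hrT j]
      simp only [RCLike.inner_apply]
      have : ((μ j : ℂ) * f j) * (starRingEnd ℂ) (b.repr x j)
          = (μ j : ℂ) * ((starRingEnd ℂ) (f j) * f j) := by rw [hf]; ring
      rw [this, RCLike.conj_mul]
      norm_cast
      simp [← Complex.ofReal_pow, ← Complex.ofReal_mul]
    have hnx : ‖x - k‖ ^ 2 = ∑ j, if μ j = 0 then 0 else ‖f j‖ ^ 2 := by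
      rw [← b.repr.norm_map (x - k), EuclideanSpace.norm_eq, Real.sq_sqrt (by positivity)]
      refine Finset.sum_congr rfl fun j _ => ?_
      rw [map_sub]
      have : (b.repr x - b.repr k) j = f j - b.repr k j := rfl
      rw [this, hrk j]
      by_cases h : μ j = 0 <;> simp [h]
    rw [hq, hnx, Finset.mul_sum]
    refine Finset.sum_le_sum fun j _ => ?_
    rcases hev j with h | h
    · simp [← hμ, h]
    · by_cases h0 : μ j = 0
      · simp [h0]
      · simp only [if_neg h0]
        exact mul_le_mul_of_nonneg_right h (sq_nonneg _)


/-- Lemma 14.4 of Kitaev: if A₁, A₂ are PSD with null spaces L₁, L₂ intersecting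
trivially, and all nonzero eigenvalues are at least v, then
A₁ + A₂ ≥ 2 v sin²(θ/2) where θ is the angle between L₁ and L₂. -/
theorem stmt0 (d : ℕ) (A₁ A₂ : Matrix (Fin d) (Fin d) ℂ)
    (h₁ : A₁.PosSemidef) (h₂ : A₂.PosSemidef)
    (L₁ L₂ : Submodule ℂ (EuclideanSpace ℂ (Fin d)))
    (hL₁ : L₁ = LinearMap.ker (Matrix.toEuclideanLin A₁))
    (hL₂ : L₂ = LinearMap.ker (Matrix.toEuclideanLin A₂))
    (htriv : L₁ ⊓ L₂ = ⊥)
    (v : ℝ) (hv : 0 < v)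
    (hev₁ : ∀ i, h₁.1.eigenvalues i = 0 ∨ v ≤ h₁.1.eigenvalues i)
    (hev₂ : ∀ i, h₂.1.eigenvalues i = 0 ∨ v ≤ h₂.1.eigenvalues i)
    (θ : ℝ)
    (hθ : Real.cos θ = sSup {t : ℝ | ∃ x ∈ L₁, ∃ y ∈ L₂,
      ‖x‖ = 1 ∧ ‖y‖ = 1 ∧ t = ‖(inner ℂ x y : ℂ)‖}) :
    (A₁ + A₂ - (((v * (2 * Real.sin (θ / 2) ^ 2) : ℝ) : ℂ)) • 1).PosSemidef := by
  classical
  set Sset := {t : ℝ | ∃ x ∈ L₁, ∃ y ∈ L₂,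
      ‖x‖ = 1 ∧ ‖y‖ = 1 ∧ t = ‖(inner ℂ x y : ℂ)‖} with hSset
  set c : ℝ := sSup Sset with hc
  have hc0 : 0 ≤ c := Real.sSup_nonneg (by
    rintro t ⟨x, _, y, _, _, _, rfl⟩; positivity)
  have hbdd : BddAbove Sset := ⟨1, by
    rintro t ⟨x, _, y, _, hx1, hy1, rfl⟩
    simpa [hx1, hy1] using norm_inner_le_norm (𝕜 := ℂ) x y⟩
  have hcs : ∀ a ∈ L₁, ∀ b ∈ L₂, ‖(inner ℂ a b : ℂ)‖ ≤ c * (‖a‖ * ‖b‖) := by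
    intro a ha b hb
    by_cases ha0 : a = 0
    · simp only [ha0, inner_zero_left, norm_zero]; positivity
    by_cases hb0 : b = 0
    · simp only [hb0, inner_zero_right, norm_zero]; positivity
    have hna : (0:ℝ) < ‖a‖ := norm_pos_iff.mpr ha0
    have hnb : (0:ℝ) < ‖b‖ := norm_pos_iff.mpr hb0
    have hmem : ‖(inner ℂ ((‖a‖⁻¹ : ℂ) • a) ((‖b‖⁻¹ : ℂ) • b) : ℂ)‖ ∈ Sset := by
      refine ⟨(‖a‖⁻¹ : ℂ) • a, L₁.smul_mem _ ha, (‖b‖⁻¹ : ℂ) • b, L₂.smul_mem _ hb,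
        norm_smul_inv_norm ha0, norm_smul_inv_norm hb0, rfl⟩
    have hle := le_csSup hbdd hmem
    have heq : ‖(inner ℂ ((‖a‖⁻¹ : ℂ) • a) ((‖b‖⁻¹ : ℂ) • b) : ℂ)‖
        = ‖a‖⁻¹ * (‖b‖⁻¹ * ‖(inner ℂ a b : ℂ)‖) := by
      rw [inner_smul_left, inner_smul_right, norm_mul, norm_mul]
      simp [RCLike.norm_conj, abs_of_nonneg, hna.le, hnb.le]
    rw [heq] at hle
    calc ‖(inner ℂ a b : ℂ)‖ = (‖a‖ * ‖b‖) * (‖a‖⁻¹ * (‖b‖⁻¹ * ‖(inner ℂ a b : ℂ)‖)) := by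
          field_simp
      _ ≤ (‖a‖ * ‖b‖) * c := by
          exact mul_le_mul_of_nonneg_left hle (by positivity)
      _ = c * (‖a‖ * ‖b‖) := by ring
  -- trig identity
  have htrig : ((v * (2 * Real.sin (θ / 2) ^ 2) : ℝ) : ℂ) = ((v * (1 - c) : ℝ) : ℂ) := by
    norm_cast
    rw [Real.sin_sq_eq_half_sub, show 2 * (θ / 2) = θ by ring, hθ]
    ring
  rw [htrig]
  set α : ℝ := v * (1 - c) with hα
  -- key quadratic form inequality
  have key : ∀ x : EuclideanSpace ℂ (Fin d),
      α * ‖x‖ ^ 2 ≤ RCLike.re (inner ℂ x (Matrix.toEuclideanLin A₁ x) : ℂ)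
        + RCLike.re (inner ℂ x (Matrix.toEuclideanLin A₂ x) : ℂ) := by
    intro x
    obtain ⟨k₁, hk₁, hq₁⟩ := specA h₁ hev₁ x
    obtain ⟨k₂, hk₂, hq₂⟩ := specA h₂ hev₂ x
    have hg := geomB c hc0 x k₁ k₂ (hcs k₁ (hL₁ ▸ hk₁) k₂ (hL₂ ▸ hk₂))
    have hg2 := mul_le_mul_of_nonneg_left hg hv.le
    nlinarith
  -- hermitian
  have hherm : (A₁ + A₂ - ((α : ℂ)) • 1).IsHermitian := by
    refine Matrix.IsHermitian.sub (h₁.1.add h₂.1) ?_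
    unfold Matrix.IsHermitian
    rw [Matrix.conjTranspose_smul, Matrix.conjTranspose_one, Complex.star_def,
      Complex.conj_ofReal]
  refine Matrix.PosSemidef.of_dotProduct_mulVec_nonneg hherm fun y => ?_
  set ξ : EuclideanSpace ℂ (Fin d) := (WithLp.equiv 2 (Fin d → ℂ)).symm y with hξ
  have hz : dotProduct (star y) (Matrix.mulVec (A₁ + A₂ - ((α : ℂ)) • 1) y)
      = (inner ℂ ξ (Matrix.toEuclideanLin (A₁ + A₂ - ((α : ℂ)) • 1) ξ) : ℂ) := by
    rw [dotProduct_comm]; rfl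
  rw [hz]
  set M := A₁ + A₂ - ((α : ℂ)) • 1 with hM
  have hone : Matrix.toEuclideanLin (1 : Matrix (Fin d) (Fin d) ℂ) ξ = ξ := by
    rw [Matrix.toEuclideanLin_apply, Matrix.one_mulVec]
  have hdec : (inner ℂ ξ (Matrix.toEuclideanLin M ξ) : ℂ)
      = (inner ℂ ξ (Matrix.toEuclideanLin A₁ ξ) : ℂ)
        + (inner ℂ ξ (Matrix.toEuclideanLin A₂ ξ) : ℂ)
        - (α : ℂ) * ((‖ξ‖ : ℂ) ^ 2) := by
    rw [hM, map_sub, map_add, map_smul]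
    rw [LinearMap.sub_apply, LinearMap.add_apply, LinearMap.smul_apply, hone]
    rw [inner_sub_right, inner_add_right, inner_smul_right, inner_self_eq_norm_sq_to_K]
    push_cast
    rfl
  have hsymm : (Matrix.toEuclideanLin M).IsSymmetric :=
    Matrix.isHermitian_iff_isSymmetric.mp hherm
  have him : (inner ℂ ξ (Matrix.toEuclideanLin M ξ) : ℂ).im = 0 := by
    have h1 : (starRingEnd ℂ) (inner ℂ ξ (Matrix.toEuclideanLin M ξ) : ℂ)
        = (inner ℂ ξ (Matrix.toEuclideanLin M ξ) : ℂ) := by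
      rw [inner_conj_symm]
      exact hsymm ξ ξ
    exact Complex.conj_eq_iff_im.mp h1
  rw [Complex.le_def]
  constructor
  · have hre : (inner ℂ ξ (Matrix.toEuclideanLin M ξ) : ℂ).re
        = RCLike.re (inner ℂ ξ (Matrix.toEuclideanLin A₁ ξ) : ℂ)
          + RCLike.re (inner ℂ ξ (Matrix.toEuclideanLin A₂ ξ) : ℂ) - α * ‖ξ‖ ^ 2 := by
      rw [hdec, show ((α:ℂ) * ((‖ξ‖:ℂ)) ^ 2) = ((α * ‖ξ‖ ^ 2 : ℝ) : ℂ) by push_cast; ring]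
      simp only [Complex.sub_re, Complex.add_re, Complex.ofReal_re, RCLike.re_to_complex]
    simp only [Complex.zero_re, hre]
    have := key ξ
    linarith
  · rw [him, Complex.zero_im]
end

section
/- Let H = H₁ + H₂ be the sum of two Hermitian operators on a finite-dimensional Hilbert space 𝓗 = 𝓣 ⊕ 𝓣^⊥ such that 𝓣 is contained in the zero eigenspace of H₂ and every eigenvalue of H₂ restricted to 𝓣^⊥ is at least J > 2‖H₁‖. Then λ(H₁|_𝓣) − ‖H₁‖² / (J − 2‖H₁‖) ≤ λ(H) ≤ λ(H₁|_𝓣), where λ(·) denotes the smallest eigenvalue. -/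
noncomputable section
namespace KKRProj
variable {E : Type*} [NormedAddCommGroup E] [InnerProductSpace ℂ E]

lemma cross_bound (A : E →L[ℂ] E) (a b : E) : |(inner ℂ a (A b) : ℂ).re| ≤ ‖A‖ * ‖a‖ * ‖b‖ := by
  calc |(inner ℂ a (A b) : ℂ).re| ≤ ‖(inner ℂ a (A b) : ℂ)‖ := by
        exact Complex.abs_re_le_norm _
    _ ≤ ‖a‖ * ‖A b‖ := norm_inner_le_norm _ _
    _ ≤ ‖a‖ * (‖A‖ * ‖b‖) := by gcongr; exact A.le_opNorm b
    _ = ‖A‖ * ‖a‖ * ‖b‖ := by ring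

lemma norm_invc_smul {u : E} (h : u ≠ 0) : ‖((‖u‖ : ℂ))⁻¹ • u‖ = 1 := by
  have hn : ‖u‖ ≠ 0 := norm_ne_zero_iff.mpr h
  rw [norm_smul, norm_inv, Complex.norm_real, Real.norm_eq_abs,
    abs_of_nonneg (norm_nonneg u)]
  field_simp

lemma combine_est (lamT K J a b t1 t2 t3 t4 s : ℝ) (hK0 : 0 ≤ K) (hlK : lamT ≤ K)
    (hpyth : b ^ 2 + a ^ 2 = 1) (ha : 0 ≤ a) (hb : 0 ≤ b) (hb1 : b ≤ 1)
    (h1 : lamT * b ^ 2 ≤ t1) (ht2 : -(K * b * a) ≤ t2) (ht3 : -(K * a * b) ≤ t3)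
    (ht4 : -(K * a * a) ≤ t4) (h2 : J * a ^ 2 ≤ s) :
    lamT - 2 * K * a + (J - 2 * K) * a ^ 2 ≤ t1 + t2 + t3 + t4 + s := by
  nlinarith [mul_nonneg (sub_nonneg.mpr hlK) (sq_nonneg a),
    mul_nonneg (mul_nonneg hK0 ha) (sub_nonneg.mpr hb1)]

lemma quad_est (K J a : ℝ) (hK0 : 0 ≤ K) (hg : 0 < J - 2 * K) :
    -(K ^ 2 / (J - 2 * K)) ≤ (J - 2 * K) * a ^ 2 - 2 * K * a := by
  rw [← neg_div, div_le_iff₀ hg]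
  nlinarith [sq_nonneg ((J - 2 * K) * a - K)]

lemma scale_rayleigh (A : E →L[ℂ] E) (S : Submodule ℂ E) (c : ℝ)
    (hC : ∀ v ∈ S, ‖v‖ = 1 → c ≤ (inner ℂ v (A v) : ℂ).re) :
    ∀ u ∈ S, c * ‖u‖ ^ 2 ≤ (inner ℂ u (A u) : ℂ).re := by
  intro u hu
  rcases eq_or_ne u 0 with rfl | h0
  · simp
  · have hn : ‖u‖ ≠ 0 := norm_ne_zero_iff.mpr h0
    have hpos : (0:ℝ) < ‖u‖ ^ 2 := by positivity
    set v := ((‖u‖ : ℂ))⁻¹ • u with hv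
    have hv1 : ‖v‖ = 1 := norm_invc_smul h0
    have hvS : v ∈ S := S.smul_mem _ hu
    have h := hC v hvS hv1
    have hval : (inner ℂ v (A v) : ℂ).re = (‖u‖ ^ 2)⁻¹ * (inner ℂ u (A u) : ℂ).re := by
      rw [hv]
      simp only [map_smul, inner_smul_left, inner_smul_right, map_inv₀, Complex.conj_ofReal]
      rw [← mul_assoc, ← mul_inv, ← Complex.ofReal_mul, ← sq,
        ← Complex.ofReal_inv, Complex.re_ofReal_mul]
    rw [hval, inv_mul_eq_div] at h
    exact (le_div_iff₀ hpos).mp h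

end KKRProj
end

open KKRProj in
/-- Projection Lemma (Kempe–Kitaev–Regev). -/
theorem stmt1 (d : ℕ) (hd : 0 < d)
    (H₁ H₂ : EuclideanSpace ℂ (Fin d) →L[ℂ] EuclideanSpace ℂ (Fin d))
    (hH₁ : IsSelfAdjoint H₁) (hH₂ : IsSelfAdjoint H₂)
    (T : Submodule ℂ (EuclideanSpace ℂ (Fin d))) (hT : T ≠ ⊥)
    (hker : ∀ x ∈ T, H₂ x = 0)
    (J : ℝ) (hJ : 2 * ‖H₁‖ < J)
    (hgap : ∀ x ∈ Tᗮ, ‖x‖ = 1 → J ≤ (inner ℂ x (H₂ x) : ℂ).re)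
    (lamH lamT : ℝ)
    (hlamH : lamH = sInf {r : ℝ | ∃ x : EuclideanSpace ℂ (Fin d),
      ‖x‖ = 1 ∧ r = (inner ℂ x ((H₁ + H₂) x) : ℂ).re})
    (hlamT : lamT = sInf {r : ℝ | ∃ x ∈ T,
      ‖x‖ = 1 ∧ r = (inner ℂ x (H₁ x) : ℂ).re}) :
    lamT - ‖H₁‖ ^ 2 / (J - 2 * ‖H₁‖) ≤ lamH ∧ lamH ≤ lamT := by
  set E := EuclideanSpace ℂ (Fin d)
  set ST : Set ℝ := {r : ℝ | ∃ x ∈ T, ‖x‖ = 1 ∧ r = (inner ℂ x (H₁ x) : ℂ).re} with hST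
  set SH : Set ℝ := {r : ℝ | ∃ x : E,
      ‖x‖ = 1 ∧ r = (inner ℂ x ((H₁ + H₂) x) : ℂ).re} with hSH
  have hK0 : (0:ℝ) ≤ ‖H₁‖ := norm_nonneg _
  have hg : 0 < J - 2 * ‖H₁‖ := by linarith
  -- a unit vector in T
  obtain ⟨y, hyT, hy0⟩ := (Submodule.ne_bot_iff T).mp hT
  set z : E := ((‖y‖ : ℂ))⁻¹ • y with hz
  have hz1 : ‖z‖ = 1 := norm_invc_smul hy0
  have hzT : z ∈ T := T.smul_mem _ hyT
  have hSTne : ST.Nonempty := ⟨(inner ℂ z (H₁ z) : ℂ).re, z, hzT, hz1, rfl⟩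
  have hSTlb : ∀ r ∈ ST, -‖H₁‖ ≤ r := by
    rintro r ⟨x, hxT, hx1, rfl⟩
    have h := (abs_le.mp (cross_bound H₁ x x)).1
    rw [hx1] at h; linarith
  have hbddT : BddBelow ST := ⟨-‖H₁‖, hSTlb⟩
  have hlamT_le : ∀ x ∈ T, ‖x‖ = 1 → lamT ≤ (inner ℂ x (H₁ x) : ℂ).re := by
    intro x hx h1
    rw [hlamT]
    exact csInf_le hbddT ⟨x, hx, h1, rfl⟩
  have hlamT_K : lamT ≤ ‖H₁‖ := by
    have h := (abs_le.mp (cross_bound H₁ z z)).2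
    rw [hz1] at h
    have := hlamT_le z hzT hz1
    nlinarith
  have hA : ∀ u ∈ T, lamT * ‖u‖ ^ 2 ≤ (inner ℂ u (H₁ u) : ℂ).re :=
    scale_rayleigh H₁ T lamT hlamT_le
  have hB : ∀ w ∈ Tᗮ, J * ‖w‖ ^ 2 ≤ (inner ℂ w (H₂ w) : ℂ).re :=
    scale_rayleigh H₂ Tᗮ J hgap
  -- main pointwise estimate
  have hmain : ∀ x : E, ‖x‖ = 1 →
      lamT - ‖H₁‖ ^ 2 / (J - 2 * ‖H₁‖) ≤ (inner ℂ x ((H₁ + H₂) x) : ℂ).re := by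
    intro x hx1
    set u : E := (T.orthogonalProjectionOnto x : E) with hu'
    set w : E := (Tᗮ.orthogonalProjectionOnto x : E) with hw'
    have hu : u ∈ T := SetLike.coe_mem _
    have hw : w ∈ Tᗮ := SetLike.coe_mem _
    have hx : u + w = x := Submodule.starProjection_add_starProjection_orthogonal (K := T) x
    have huw : (inner ℂ u w : ℂ) = 0 := Submodule.inner_right_of_mem_orthogonal hu hw
    have hpyth : ‖u‖ ^ 2 + ‖w‖ ^ 2 = 1 := by
      have h := norm_add_sq (𝕜 := ℂ) u w
      rw [hx, hx1, huw] at h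
      simp at h
      linarith
    have hnu : 0 ≤ ‖u‖ := norm_nonneg _
    have hnw : 0 ≤ ‖w‖ := norm_nonneg _
    have hu1 : ‖u‖ ≤ 1 := by nlinarith
    -- H₂ part
    have hH2inner : (inner ℂ x (H₂ x) : ℂ) = inner ℂ w (H₂ w) := by
      have hH2x : H₂ x = H₂ w := by rw [← hx, map_add, hker u hu, zero_add]
      rw [hH2x, ← hx, inner_add_left]
      have h0 : (inner ℂ u (H₂ w) : ℂ) = 0 := by
        have hs := hH₂.isSymmetric u w
        simp only [ContinuousLinearMap.coe_coe] at hs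
        rw [← hs, hker u hu, inner_zero_left]
      rw [h0, zero_add]
    have h2 : J * ‖w‖ ^ 2 ≤ (inner ℂ x (H₂ x) : ℂ).re := by
      rw [hH2inner]; exact hB w hw
    -- H₁ expansion
    have hexp : (inner ℂ x (H₁ x) : ℂ) =
        inner ℂ u (H₁ u) + inner ℂ u (H₁ w) + inner ℂ w (H₁ u) + inner ℂ w (H₁ w) := by
      rw [← hx, map_add, inner_add_left, inner_add_right, inner_add_right]
      ring
    have e := congrArg Complex.re hexp
    simp only [Complex.add_re] at e
    have h1 : lamT * ‖u‖ ^ 2 ≤ (inner ℂ u (H₁ u) : ℂ).re := hA u hu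
    have t2b := (abs_le.mp (cross_bound H₁ u w)).1
    have t3b := (abs_le.mp (cross_bound H₁ w u)).1
    have t4b := (abs_le.mp (cross_bound H₁ w w)).1
    have hre : (inner ℂ x ((H₁ + H₂) x) : ℂ).re
        = (inner ℂ x (H₁ x) : ℂ).re + (inner ℂ x (H₂ x) : ℂ).re := by
      simp [inner_add_right]
    have hstep := combine_est lamT ‖H₁‖ J ‖w‖ ‖u‖ _ _ _ _ _ hK0 hlamT_K
      hpyth hnw hnu hu1 h1 t2b t3b t4b h2
    have hquad := quad_est ‖H₁‖ J ‖w‖ hK0 hg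
    rw [hre, e]
    linarith
  have hSHlb : ∀ r ∈ SH, lamT - ‖H₁‖ ^ 2 / (J - 2 * ‖H₁‖) ≤ r := by
    rintro r ⟨x, hx1, rfl⟩
    exact hmain x hx1
  have hsub : ST ⊆ SH := by
    rintro r ⟨x, hxT, hx1, rfl⟩
    refine ⟨x, hx1, ?_⟩
    rw [ContinuousLinearMap.add_apply, hker x hxT, add_zero]
  have hSHne : SH.Nonempty := hSTne.mono hsub
  constructor
  · rw [hlamH]
    exact le_csInf hSHne hSHlb
  · rw [hlamH, hlamT]
    exact csInf_le_csInf ⟨lamT - ‖H₁‖ ^ 2 / (J - 2 * ‖H₁‖), hSHlb⟩ hSTne hsub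
end
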